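/- Let ℱ be a nonempty family of finite simple graphs and let a ≥ 1 and c ≥ 1 be integers such that the pair (a, c) is ℱ-admissible. Then for every ε > 0 there exists N such that for all n ≥ N, Dist(n, Forb(ℱ)) ≤ (1/(√a + √c)² + ε) · binom(n,2). -/

import Mathlib

/-- A family of finite simple graphs, each presented on a vertex set `Fin n`. -/
abbrev GraphFam : Type := Set ((n : ℕ) × SimpleGraph (Fin n))

/-- The edit distance between two simple graphs on the same finite vertex set. -/
noncomputable def editDist {V : Type} [Fintype V] (G G' : SimpleGraph V) : ℕ :=
  (symmDiff G.edgeSet G'.edgeSet).ncard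

/-- A graph `G` is `ℱ`-free if no member of `ℱ` embeds into `G`. -/
def FamFree (ℱ : GraphFam) {V : Type} (G : SimpleGraph V) : Prop :=
  ∀ F ∈ ℱ, ¬ Nonempty (F.2 ↪g G)

/-- `Dist(G, Forb(ℱ))`: minimum edit distance from `G` to an `ℱ`-free graph on
the same vertex set. -/
noncomputable def distFam (ℱ : GraphFam) {V : Type} [Fintype V] (G : SimpleGraph V) : ℕ :=
  sInf { d | ∃ G' : SimpleGraph V, FamFree ℱ G' ∧ d = editDist G G' }

/-- `Dist(n, Forb(ℱ))`: maximum of `Dist(G, Forb(ℱ))` over `n`-vertex graphs. -/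
noncomputable def distFamN (ℱ : GraphFam) (n : ℕ) : ℕ :=
  sSup { d | ∃ G : SimpleGraph (Fin n), d = distFam ℱ G }

/-- `F` admits a partition of its vertex set into `a` independent sets and `c`
cliques (parts may be empty). -/
def HasPartition {V : Type} (F : SimpleGraph V) (a c : ℕ) : Prop :=
  ∃ φ : V → Fin a ⊕ Fin c,
    (∀ (i : Fin a) (u v : V), φ u = Sum.inl i → φ v = Sum.inl i → ¬ F.Adj u v) ∧
    (∀ (j : Fin c) (u v : V), φ u = Sum.inr j → φ v = Sum.inr j → u ≠ v → F.Adj u v)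

/-- The pair `(a,c)` is `ℱ`-admissible if no `F ∈ ℱ` admits a partition of its
vertex set into `a` independent sets and `c` cliques. -/
def Admissible (ℱ : GraphFam) (a c : ℕ) : Prop :=
  ∀ F ∈ ℱ, ¬ HasPartition F.2 a c


open Filter Topology

set_option maxRecDepth 4000
set_option linter.unusedSectionVars false


lemma sum_eval_two {V T : Type} [Fintype V] [DecidableEq V] [Fintype T]
    (u v : V) (huv : v ≠ u) (f : T → T → ℕ) :
    ∑ χ : V → T, f (χ u) (χ v)
      = (Fintype.card T) ^ (Fintype.card V - 2) * ∑ s : T, ∑ t : T, f s t := by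
  classical
  let e1 := Equiv.funSplitAt u T
  let e2 := Equiv.funSplitAt (⟨v, huv⟩ : {j : V // j ≠ u}) T
  let E := e1.trans ((Equiv.refl T).prodCongr e2)
  have h1 : ∀ χ : V → T, f (χ u) (χ v) = f (E χ).1 (E χ).2.1 := by
    intro χ; rfl
  rw [Fintype.sum_equiv E (fun χ => f (χ u) (χ v)) (fun p => f p.1 p.2.1) (fun χ => h1 χ)]
  rw [Fintype.sum_prod_type]
  simp only [Fintype.sum_prod_type]
  have hcard : Fintype.card {j : {j : V // j ≠ u} // j ≠ (⟨v, huv⟩ : {j : V // j ≠ u})}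
      = Fintype.card V - 2 := by
    rw [Fintype.card_subtype_compl, Fintype.card_subtype_compl]
    simp [Fintype.card_subtype_eq]
    omega
  rw [Finset.mul_sum]
  refine Finset.sum_congr rfl fun s _ => ?_
  rw [Finset.mul_sum]
  refine Finset.sum_congr rfl fun t _ => ?_
  rw [Finset.sum_const, Finset.card_univ, Fintype.card_fun, hcard, smul_eq_mul, mul_comm]


lemma inner_left {a k c l : ℕ} (i : Fin a) :
    (Finset.univ.filter (fun t : (Fin a × Fin k) ⊕ (Fin c × Fin l) =>
      Sum.inl i = Sum.map Prod.fst Prod.fst t)).card = k := by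
  rw [Finset.card_filter, Fintype.sum_sum_type]
  simp [Fintype.sum_prod_type, Finset.sum_ite_eq]
  rw [Finset.card_filter, Fintype.sum_prod_type]
  simp [Finset.sum_ite_eq, apply_ite Finset.card]

lemma inner_right {a k c l : ℕ} (j : Fin c) :
    (Finset.univ.filter (fun t : (Fin a × Fin k) ⊕ (Fin c × Fin l) =>
      Sum.inr j = Sum.map Prod.fst Prod.fst t)).card = l := by
  rw [Finset.card_filter, Fintype.sum_sum_type]
  simp [Fintype.sum_prod_type, Finset.sum_ite_eq]
  rw [Finset.card_filter, Fintype.sum_prod_type]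
  simp [Finset.sum_ite_eq, apply_ite Finset.card]

lemma count_left (a k c l : ℕ) :
    ∑ s : (Fin a × Fin k) ⊕ (Fin c × Fin l), ∑ t : (Fin a × Fin k) ⊕ (Fin c × Fin l),
      (if Sum.map Prod.fst Prod.fst s = Sum.map Prod.fst Prod.fst t ∧
          (Sum.map (Prod.fst (α := Fin a) (β := Fin k)) (Prod.fst (α := Fin c) (β := Fin l)) s).isLeft then (1:ℕ) else 0)
      = a * k ^ 2 := by
  simp [Fintype.sum_sum_type, Fintype.sum_prod_type, inner_left, sq]
  ring

lemma count_right (a k c l : ℕ) :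
    ∑ s : (Fin a × Fin k) ⊕ (Fin c × Fin l), ∑ t : (Fin a × Fin k) ⊕ (Fin c × Fin l),
      (if Sum.map Prod.fst Prod.fst s = Sum.map Prod.fst Prod.fst t ∧
          (Sum.map (Prod.fst (α := Fin a) (β := Fin k)) (Prod.fst (α := Fin c) (β := Fin l)) s).isRight then (1:ℕ) else 0)
      = c * l ^ 2 := by
  simp [Fintype.sum_sum_type, Fintype.sum_prod_type, inner_right, sq]
  ring

def approxG' (G : SimpleGraph V) {a c : ℕ} (φ : V → Fin a ⊕ Fin c) : SimpleGraph V where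
  Adj u v := u ≠ v ∧ (if φ u = φ v then (φ u).isRight = true else G.Adj u v)
  symm := by
    constructor
    rintro u v ⟨h1, h2⟩
    refine ⟨h1.symm, ?_⟩
    by_cases h : φ u = φ v
    · rw [if_pos h.symm]; rw [if_pos h] at h2; rw [← h]; exact h2
    · rw [if_neg (fun e => h e.symm)]; rw [if_neg h] at h2; exact h2.symm
  loopless := ⟨fun v h => h.1 rfl⟩

def badG (G : SimpleGraph V) {a c : ℕ} (φ : V → Fin a ⊕ Fin c) : SimpleGraph V where
  Adj u v := u ≠ v ∧ φ u = φ v ∧ (G.Adj u v ↔ (φ u).isLeft = true)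
  symm := by
    constructor
    rintro u v ⟨h1, h2, h3⟩
    exact ⟨h1.symm, h2.symm, by rwa [G.adj_comm, ← h2]⟩
  loopless := ⟨fun v h => h.1 rfl⟩



lemma approxG'_free (ℱ : GraphFam) {a c : ℕ} (hadm : Admissible ℱ a c)
    (G : SimpleGraph V) (φ : V → Fin a ⊕ Fin c) : FamFree ℱ (approxG' G φ) := by
  rintro F hF ⟨e⟩
  refine hadm F hF ⟨φ ∘ e, ?_, ?_⟩
  · rintro i u v hu hv hadj
    have h2 := (e.map_adj_iff.mpr hadj).2
    simp only [Function.comp_apply] at hu hv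
    rw [if_pos (hu.trans hv.symm), hu] at h2
    simp at h2
  · rintro j u v hu hv huv
    simp only [Function.comp_apply] at hu hv
    refine e.map_adj_iff.mp ⟨fun h => huv (e.injective h), ?_⟩
    rw [if_pos (hu.trans hv.symm), hu]
    rfl

lemma symmDiff_subset_badG (G : SimpleGraph V) {a c : ℕ} (φ : V → Fin a ⊕ Fin c) :
    symmDiff G.edgeSet (approxG' G φ).edgeSet ⊆ (badG G φ).edgeSet := by
  intro e he
  induction e with
  | _ u v =>
    simp only [Set.mem_symmDiff, SimpleGraph.mem_edgeSet] at he
    rw [SimpleGraph.mem_edgeSet]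
    by_cases hφ : φ u = φ v
    · rcases he with ⟨h1, h2⟩ | ⟨h1, h2⟩
      · have hne := h1.ne
        refine ⟨hne, hφ, iff_of_true h1 ?_⟩
        by_contra hL
        exact h2 ⟨hne, by rw [if_pos hφ]; rcases hmem : φ u with i | j <;> simp [hmem] at hL ⊢⟩
      · obtain ⟨hne, hR⟩ := h1
        rw [if_pos hφ] at hR
        refine ⟨hne, hφ, iff_of_false h2 ?_⟩
        rcases hmem : φ u with i | j <;> simp [hmem] at hR ⊢
    · exfalso
      rcases he with ⟨h1, h2⟩ | ⟨h1, h2⟩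
      · exact h2 ⟨h1.ne, by rwa [if_neg hφ]⟩
      · obtain ⟨-, h1'⟩ := h1
        rw [if_neg hφ] at h1'
        exact h2 h1'


lemma per_graph (ℱ : GraphFam) {a c : ℕ} (hadm : Admissible ℱ a c) {k l : ℕ}
    (ha : 0 < a) (hc : 0 < c) (hk : 0 < k) (hl : 0 < l) {n : ℕ} (hn : 2 ≤ n)
    (G : SimpleGraph (Fin n)) :
    (a*k+c*l)^2 * (2 * distFam ℱ G) ≤ (n*n - n) * max (a*k^2) (c*l^2) := by
  classical
  set M := a*k+c*l with hM
  set K := max (a*k^2) (c*l^2) with hK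
  let T := (Fin a × Fin k) ⊕ (Fin c × Fin l)
  let ψ : T → Fin a ⊕ Fin c := Sum.map Prod.fst Prod.fst
  have hT : Fintype.card T = M := by simp [T, hM]
  have hTne : Nonempty T := ⟨Sum.inl ⟨⟨0, ha⟩, ⟨0, hk⟩⟩⟩
  have hfne : Nonempty (Fin n → T) := ⟨fun _ => Classical.choice hTne⟩
  let cost : (Fin n → T) → ℕ := fun χ =>
    ∑ p : Fin n × Fin n, if (badG G (ψ ∘ χ)).Adj p.1 p.2 then 1 else 0
  have hedit : ∀ χ : Fin n → T, 2 * distFam ℱ G ≤ cost χ := by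
    intro χ
    have h1 : distFam ℱ G ≤ editDist G (approxG' G (ψ ∘ χ)) :=
      Nat.sInf_le ⟨_, approxG'_free ℱ hadm G _, rfl⟩
    have h2 : editDist G (approxG' G (ψ ∘ χ)) ≤ ((badG G (ψ ∘ χ)).edgeSet).ncard :=
      Set.ncard_le_ncard (symmDiff_subset_badG G _) (Set.toFinite _)
    have h3 : 2 * ((badG G (ψ ∘ χ)).edgeSet).ncard = cost χ := by
      rw [Set.ncard_eq_toFinset_card']
      have h4 := SimpleGraph.two_mul_card_edgeFinset (G := badG G (ψ ∘ χ))
      rw [show ((badG G (ψ ∘ χ)).edgeSet).toFinset = (badG G (ψ ∘ χ)).edgeFinset from rfl, h4]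
      rw [Finset.card_filter]
    omega
  have hcV : Fintype.card (Fin n) = n := by simp
  have hbound : ∀ p : Fin n × Fin n,
      (∑ χ : Fin n → T, if (badG G (ψ ∘ χ)).Adj p.1 p.2 then 1 else 0)
        ≤ if p.1 = p.2 then 0 else M^(n-2) * K := by
    rintro ⟨u, v⟩
    by_cases huv : u = v
    · simp [huv, badG]
    · rw [if_neg huv]
      by_cases hadj : G.Adj u v
      · have heq : ∀ χ : Fin n → T, (if (badG G (ψ ∘ χ)).Adj u v then 1 else 0) =
            (fun s t : T => if ψ s = ψ t ∧ (ψ s).isLeft then (1:ℕ) else 0) (χ u) (χ v) := by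
          intro χ
          apply if_congr _ rfl rfl
          show (u ≠ v ∧ (ψ ∘ χ) u = (ψ ∘ χ) v ∧ (G.Adj u v ↔ ((ψ ∘ χ) u).isLeft = true)) ↔ _
          simp only [Function.comp_apply]
          constructor
          · rintro ⟨-, h1, h2⟩; exact ⟨h1, h2.mp hadj⟩
          · rintro ⟨h1, h2⟩; exact ⟨huv, h1, iff_of_true hadj h2⟩
        have hkey := sum_eval_two u v (fun h => huv h.symm)
          (fun s t : T => if ψ s = ψ t ∧ (ψ s).isLeft then (1:ℕ) else 0)
        rw [Finset.sum_congr rfl (fun χ _ => heq χ), hkey, count_left a k c l, hT, hcV]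
        exact Nat.mul_le_mul_left _ (le_max_left _ _)
      · have heq : ∀ χ : Fin n → T, (if (badG G (ψ ∘ χ)).Adj u v then 1 else 0) =
            (fun s t : T => if ψ s = ψ t ∧ (ψ s).isRight then (1:ℕ) else 0) (χ u) (χ v) := by
          intro χ
          apply if_congr _ rfl rfl
          show (u ≠ v ∧ (ψ ∘ χ) u = (ψ ∘ χ) v ∧ (G.Adj u v ↔ ((ψ ∘ χ) u).isLeft = true)) ↔ _
          simp only [Function.comp_apply]
          constructor
          · rintro ⟨-, h1, h2⟩
            refine ⟨h1, ?_⟩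
            rcases hm : ψ (χ u) with i | j
            · exact absurd (h2.mpr (by simp [hm])) hadj
            · simp
          · rintro ⟨h1, h2⟩
            refine ⟨huv, h1, iff_of_false hadj ?_⟩
            rcases hm : ψ (χ u) with i | j
            · simp [hm] at h2
            · simp
        have hkey := sum_eval_two u v (fun h => huv h.symm)
          (fun s t : T => if ψ s = ψ t ∧ (ψ s).isRight then (1:ℕ) else 0)
        rw [Finset.sum_congr rfl (fun χ _ => heq χ), hkey, count_right a k c l, hT, hcV]
        exact Nat.mul_le_mul_left _ (le_max_right _ _)
  have hsum : ∑ χ : Fin n → T, cost χ ≤ (n*n - n) * (M^(n-2) * K) := by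
    have hswap : ∑ χ : Fin n → T, cost χ =
        ∑ p : Fin n × Fin n, ∑ χ : Fin n → T,
          (if (badG G (ψ ∘ χ)).Adj p.1 p.2 then 1 else 0) := Finset.sum_comm
    rw [hswap]
    calc ∑ p : Fin n × Fin n, ∑ χ : Fin n → T,
          (if (badG G (ψ ∘ χ)).Adj p.1 p.2 then 1 else 0)
        ≤ ∑ p : Fin n × Fin n, (if p.1 = p.2 then 0 else M^(n-2) * K) :=
          Finset.sum_le_sum (fun p _ => hbound p)
      _ = (n*n - n) * (M^(n-2) * K) := by
          rw [Finset.sum_ite, Finset.sum_const_zero, Finset.sum_const, zero_add, smul_eq_mul]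
          congr 1
          have : (Finset.univ.filter fun p : Fin n × Fin n => ¬ p.1 = p.2)
              = (Finset.univ : Finset (Fin n)).offDiag := by
            ext p; simp [Finset.mem_offDiag]
          rw [this, Finset.offDiag_card]
          simp
  obtain ⟨χ, -, hχ⟩ := Finset.exists_le_of_sum_le (Finset.univ_nonempty (α := Fin n → T))
    (f := fun χ => M^2 * cost χ) (g := fun _ => (n*n - n) * K) (by
      rw [← Finset.mul_sum, Finset.sum_const, Finset.card_univ, Fintype.card_fun, hT, hcV,
        smul_eq_mul]
      calc M^2 * ∑ χ : Fin n → T, cost χ ≤ M^2 * ((n*n - n) * (M^(n-2) * K)) :=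
            Nat.mul_le_mul_left _ hsum
        _ = M^(2+(n-2)) * ((n*n - n) * K) := by rw [pow_add]; ring
        _ = M^n * ((n*n - n) * K) := by rw [show 2+(n-2) = n from by omega])
  calc M^2 * (2 * distFam ℱ G) ≤ M^2 * cost χ := Nat.mul_le_mul_left _ (hedit χ)
    _ ≤ (n*n - n) * K := hχ



lemma exists_kl (a c : ℕ) (ha : 1 ≤ a) (hc : 1 ≤ c) (ε : ℝ) (hε : 0 < ε) :
    ∃ k l : ℕ, 0 < k ∧ 0 < l ∧
      (a:ℝ) * k^2 ≤ (1/(Real.sqrt a + Real.sqrt c)^2 + ε) * ((a*k+c*l : ℕ):ℝ)^2 ∧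
      (c:ℝ) * l^2 ≤ (1/(Real.sqrt a + Real.sqrt c)^2 + ε) * ((a*k+c*l : ℕ):ℝ)^2 := by
  have ha' : (0:ℝ) < a := by exact_mod_cast ha
  have hc' : (0:ℝ) < c := by exact_mod_cast hc
  set sa := Real.sqrt a with hsa
  set sc := Real.sqrt c with hsc
  have hsa0 : 0 < sa := Real.sqrt_pos.mpr ha'
  have hsc0 : 0 < sc := Real.sqrt_pos.mpr hc'
  have hsa2 : sa^2 = a := Real.sq_sqrt ha'.le
  have hsc2 : sc^2 = c := Real.sq_sqrt hc'.le
  set r := sc / sa with hr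
  have hr0 : 0 < r := div_pos hsc0 hsa0
  set lam := 1/(sa + sc)^2 with hlam
  -- the sequences
  set kf : ℕ → ℕ := fun t => ⌊(t:ℝ) * r⌋₊ + 1 with hkf
  -- u t → r
  have hu : Tendsto (fun t : ℕ => (kf t : ℝ) / t) atTop (𝓝 r) := by
    have hlow : ∀ᶠ t : ℕ in atTop, r ≤ (kf t : ℝ) / t := by
      filter_upwards [eventually_ge_atTop 1] with t ht
      have ht' : (0:ℝ) < t := by exact_mod_cast ht
      rw [le_div_iff₀ ht']
      calc r * t = (t:ℝ) * r := by ring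
        _ ≤ ⌊(t:ℝ) * r⌋₊ + 1 := (Nat.lt_floor_add_one _).le
        _ = (kf t : ℝ) := by push_cast [hkf]; ring
    have hhigh : ∀ᶠ t : ℕ in atTop, (kf t : ℝ) / t ≤ r + 1/t := by
      filter_upwards [eventually_ge_atTop 1] with t ht
      have ht' : (0:ℝ) < t := by exact_mod_cast ht
      rw [div_le_iff₀ ht']
      have h1 : (⌊(t:ℝ) * r⌋₊ : ℝ) ≤ (t:ℝ) * r := Nat.floor_le (by positivity)
      have : (kf t : ℝ) = ⌊(t:ℝ) * r⌋₊ + 1 := by push_cast [hkf]; ring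
      rw [this]
      calc (⌊(t:ℝ) * r⌋₊ : ℝ) + 1 ≤ (t:ℝ) * r + 1 := by linarith
        _ = (r + 1/t) * t := by field_simp
    have hlim : Tendsto (fun t : ℕ => r + 1/(t:ℝ)) atTop (𝓝 r) := by
      have := tendsto_one_div_atTop_nhds_zero_nat (𝕜 := ℝ)
      simpa using (tendsto_const_nhds (x := r) (f := atTop)).add this
    exact tendsto_of_tendsto_of_tendsto_of_le_of_le' tendsto_const_nhds hlim hlow hhigh
  -- denominator limit
  have hden : Tendsto (fun t : ℕ => (a:ℝ) * ((kf t : ℝ)/t) + c) atTop (𝓝 ((a:ℝ)*r + c)) := by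
    exact ((hu.const_mul _).add tendsto_const_nhds)
  have hdenpos : (0:ℝ) < (a:ℝ)*r + c := by positivity
  have hAlim : Tendsto (fun t : ℕ => (a:ℝ) * ((kf t : ℝ)/t)^2 / ((a:ℝ)*((kf t:ℝ)/t) + c)^2)
      atTop (𝓝 ((a:ℝ)*r^2 / ((a:ℝ)*r + c)^2)) := by
    exact (((hu.pow 2).const_mul _).div (hden.pow 2) (by positivity))
  have hClim : Tendsto (fun t : ℕ => (c:ℝ) / ((a:ℝ)*((kf t:ℝ)/t) + c)^2)
      atTop (𝓝 ((c:ℝ) / ((a:ℝ)*r + c)^2)) := by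
    exact (tendsto_const_nhds.div (hden.pow 2) (by positivity))
  -- identify limits with lam
  have hkey : (a:ℝ)*r + c = sc * (sa + sc) := by
    rw [hr]
    field_simp
    nlinarith [hsa2, hsc2]
  have hA_eq : (a:ℝ)*r^2 / ((a:ℝ)*r + c)^2 = lam := by
    rw [hkey, hlam, hr]
    rw [div_pow, ← hsa2]
    field_simp
  have hC_eq : (c:ℝ) / ((a:ℝ)*r + c)^2 = lam := by
    rw [hkey, hlam, ← hsc2]
    rw [mul_pow]
    rw [div_eq_div_iff (by positivity) (by positivity)]
    ring
  rw [hA_eq] at hAlim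
  rw [hC_eq] at hClim
  have hlt : lam < lam + ε := by linarith
  obtain ⟨t, ht1, hA, hC⟩ := ((eventually_ge_atTop 1).and
    ((hAlim.eventually_lt_const hlt).and (hClim.eventually_lt_const hlt))).exists
  have htpos : (0:ℝ) < t := by exact_mod_cast ht1
  have hMcast : ((a*(kf t)+c*t : ℕ):ℝ) = (a:ℝ)*(kf t) + (c:ℝ)*t := by push_cast; ring
  have hMpos : (0:ℝ) < (a:ℝ)*(kf t) + (c:ℝ)*t := by positivity
  have hrewA : (a:ℝ) * ((kf t : ℝ)/t)^2 / ((a:ℝ)*((kf t:ℝ)/t) + c)^2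
      = (a:ℝ)*(kf t)^2 / ((a:ℝ)*(kf t) + (c:ℝ)*t)^2 := by
    rw [div_eq_div_iff (by positivity) (by positivity)]
    field_simp
    try ring
  have hrewC : (c:ℝ) / ((a:ℝ)*((kf t:ℝ)/t) + c)^2
      = (c:ℝ)*(t:ℝ)^2 / ((a:ℝ)*(kf t) + (c:ℝ)*t)^2 := by
    rw [div_eq_div_iff (by positivity) (by positivity)]
    field_simp
    try ring
  rw [hrewA] at hA
  rw [hrewC] at hC
  rw [div_lt_iff₀ (by positivity)] at hA hC
  refine ⟨kf t, t, Nat.succ_pos _, ht1, ?_, ?_⟩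
  · rw [hMcast]; exact hA.le
  · rw [hMcast]; exact hC.le

theorem admissible_pair_bound (ℱ : GraphFam) (hne : ℱ.Nonempty) (a c : ℕ)
    (ha : 1 ≤ a) (hc : 1 ≤ c) (hadm : Admissible ℱ a c) :
    ∀ ε : ℝ, 0 < ε → ∃ N : ℕ, ∀ n : ℕ, N ≤ n →
      (distFamN ℱ n : ℝ) ≤
        (1 / (Real.sqrt (a : ℝ) + Real.sqrt (c : ℝ)) ^ 2 + ε) * (n.choose 2 : ℝ) := by
  intro ε hε
  obtain ⟨k, l, hk, hl, hA, hC⟩ := exists_kl a c ha hc ε hε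
  refine ⟨2, fun n hn => ?_⟩
  classical
  set lam := 1/(Real.sqrt (a:ℝ) + Real.sqrt (c:ℝ))^2 with hlam
  set s := { d | ∃ G : SimpleGraph (Fin n), d = distFam ℱ G } with hs
  have hsne : s.Nonempty := ⟨distFam ℱ (⊥ : SimpleGraph (Fin n)), ⊥, rfl⟩
  have hsfin : s.Finite := by
    have : s = Set.range (fun G : SimpleGraph (Fin n) => distFam ℱ G) := by
      ext d; simp [hs, Set.mem_range, eq_comm]
    rw [this]; exact Set.finite_range _
  obtain ⟨G₀, hG₀⟩ : distFamN ℱ n ∈ s := hsne.csSup_mem hsfin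
  have hpg := per_graph ℱ hadm ha hc hk hl hn G₀
  set M := a*k+c*l with hM
  set K := max (a*k^2) (c*l^2) with hK
  have hMpos : 0 < M := by positivity
  have hnn : n ≤ n*n := Nat.le_mul_of_pos_left n (by omega)
  set d := distFam ℱ G₀ with hd
  have hdr : ((M:ℝ))^2 * (2*(d:ℝ)) ≤ ((n:ℝ)^2 - n) * (K:ℝ) := by
    have := hpg
    have h0 : ((M^2 * (2*d) : ℕ):ℝ) ≤ (((n*n-n) * K : ℕ):ℝ) := by exact_mod_cast this
    push_cast [Nat.cast_sub hnn] at h0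
    calc ((M:ℝ))^2 * (2*(d:ℝ)) = ((M:ℝ))^2 * (2*(d:ℝ)) := rfl
      _ ≤ ((n:ℝ)*n - n) * (K:ℝ) := h0
      _ = ((n:ℝ)^2 - n) * (K:ℝ) := by ring
  have hKr : (K:ℝ) ≤ (lam + ε) * ((M:ℝ))^2 := by
    have h1 : (K:ℝ) = max ((a:ℝ)*k^2) ((c:ℝ)*l^2) := by
      rw [hK]; push_cast; try ring_nf
    rw [h1]
    have hMcast : ((a*k+c*l : ℕ):ℝ) = (M:ℝ) := by rw [hM]
    rw [hMcast] at hA hC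
    exact max_le hA hC
  have hn2 : (2:ℝ) ≤ n := by exact_mod_cast hn
  have hnneg : (0:ℝ) ≤ (n:ℝ)^2 - n := by nlinarith
  have hMr : (0:ℝ) < ((M:ℝ))^2 := by positivity
  have h6 : ((n:ℝ)^2 - n) * (K:ℝ) ≤ ((n:ℝ)^2-n)*((lam+ε)*((M:ℝ))^2) :=
    mul_le_mul_of_nonneg_left hKr hnneg
  have h7 : ((M:ℝ))^2 * (2*(d:ℝ)) ≤ ((n:ℝ)^2-n)*((lam+ε)*((M:ℝ))^2) := hdr.trans h6
  have h8 : 2*(d:ℝ) ≤ ((n:ℝ)^2-n)*(lam+ε) := by nlinarith [h7, hMr]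
  have hchoose : (n.choose 2 : ℝ) = (n:ℝ)*((n:ℝ)-1)/2 := Nat.cast_choose_two (K := ℝ) n
  rw [hG₀, hchoose]
  have : (n:ℝ)*((n:ℝ)-1)/2 = ((n:ℝ)^2-n)/2 := by ring
  rw [this]
  nlinarith [h8]
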